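/- Let (ωₙ) be a sequence of positive reals decreasing monotonically to 0, and let T be the block-diagonal operator on ℓ²(ℕ) built from the 2×2 blocks [[1, −ωₙ],[0,0]]. Then T is idempotent and attains its norm, with ‖T‖ = sqrt(1 + ω₁²). -/

import Mathlib

private lemma lp2_norm_sq (f : lp (fun _ : ℕ => EuclideanSpace ℂ (Fin 2)) 2) :
    ‖f‖ ^ 2 = ∑' n, ‖f n‖ ^ 2 := by
  have h := lp.norm_rpow_eq_tsum (p := 2) (by norm_num) f
  simpa [ENNReal.toReal_ofNat, Real.rpow_natCast] using h

private lemma lp2_summable (f : lp (fun _ : ℕ => EuclideanSpace ℂ (Fin 2)) 2) :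
    Summable fun n => ‖f n‖ ^ (2:ℕ) := by
  have h := (lp.memℓp f).summable (p := 2) (by norm_num)
  simpa [ENNReal.toReal_ofNat, Real.rpow_natCast] using h

private lemma euc_norm_sq (v : EuclideanSpace ℂ (Fin 2)) : ‖v‖^2 = ‖v 0‖^2 + ‖v 1‖^2 := by
  rw [EuclideanSpace.norm_eq, Real.sq_sqrt (by positivity)]
  simp [Fin.sum_univ_two]

private lemma block_bound (a b : ℂ) (w : ℝ) (hw : 0 ≤ w) :
    ‖a - (w:ℂ) * b‖^2 ≤ (1 + w^2) * (‖a‖^2 + ‖b‖^2) := by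
  have h1 : ‖a - (w:ℂ) * b‖ ≤ ‖a‖ + w * ‖b‖ := by
    calc ‖a - (w:ℂ) * b‖ ≤ ‖a‖ + ‖(w:ℂ) * b‖ := norm_sub_le _ _
    _ = ‖a‖ + w * ‖b‖ := by rw [norm_mul, Complex.norm_real, Real.norm_of_nonneg hw]
  nlinarith [norm_nonneg a, norm_nonneg b, norm_nonneg (a - (w:ℂ)*b), sq_nonneg (w * ‖a‖ - ‖b‖)]

theorem blockDiag_skew_projection_normAttain
    (ω : ℕ → ℝ) (hpos : ∀ n, 0 < ω n) (hanti : StrictAnti ω)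
    (hlim : Filter.Tendsto ω Filter.atTop (nhds 0))
    (T : lp (fun _ : ℕ => EuclideanSpace ℂ (Fin 2)) 2 →L[ℂ]
          lp (fun _ : ℕ => EuclideanSpace ℂ (Fin 2)) 2)
    (hT : ∀ (x : lp (fun _ : ℕ => EuclideanSpace ℂ (Fin 2)) 2) (n : ℕ),
      (T x) n 0 = x n 0 - (ω n : ℂ) * x n 1 ∧ (T x) n 1 = 0) :
    IsIdempotentElem T ∧ (∃ x, ‖x‖ = 1 ∧ ‖T x‖ = ‖T‖) ∧
      ‖T‖ = Real.sqrt (1 + ω 0 ^ 2) := by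
  set s : ℝ := Real.sqrt (1 + ω 0 ^ 2) with hs_def
  have h1pos : (0:ℝ) < 1 + ω 0 ^ 2 := by positivity
  have hs_pos : 0 < s := Real.sqrt_pos.mpr h1pos
  have hs2 : s ^ 2 = 1 + ω 0 ^ 2 := Real.sq_sqrt h1pos.le
  have hr : s⁻¹ - ω 0 * (-(ω 0) * s⁻¹) = s := by
    field_simp
    nlinarith [hs2]
  -- idempotent
  have hidem : IsIdempotentElem T := by
    rw [IsIdempotentElem]
    refine ContinuousLinearMap.ext fun x => ?_
    rw [ContinuousLinearMap.mul_apply]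
    apply lp.ext
    funext n
    apply PiLp.ext
    intro i
    fin_cases i
    · show (T (T x)) n 0 = (T x) n 0
      rw [(hT (T x) n).1, (hT x n).2]
      ring
    · show (T (T x)) n 1 = (T x) n 1
      rw [(hT (T x) n).2, (hT x n).2]
  -- upper bound
  have hbound : ∀ x : lp (fun _ : ℕ => EuclideanSpace ℂ (Fin 2)) 2, ‖T x‖ ≤ s * ‖x‖ := by
    intro x
    have key : ‖T x‖ ^ 2 ≤ (s * ‖x‖) ^ 2 := by
      rw [mul_pow, hs2, lp2_norm_sq (T x), lp2_norm_sq x, ← tsum_mul_left]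
      refine Summable.tsum_le_tsum (fun n => ?_) (lp2_summable (T x)) ((lp2_summable x).mul_left _)
      have e1 : ‖(T x) n‖^2 = ‖x n 0 - (ω n : ℂ) * x n 1‖^2 := by
        rw [euc_norm_sq, (hT x n).1, (hT x n).2]
        simp
      have e2 := block_bound (x n 0) (x n 1) (ω n) (hpos n).le
      have e3 : ω n ≤ ω 0 := hanti.antitone (Nat.zero_le n)
      have e4 : (1 + (ω n)^2) * (‖x n 0‖^2 + ‖x n 1‖^2)
          ≤ (1 + ω 0 ^2) * (‖x n 0‖^2 + ‖x n 1‖^2) := by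
        have : (ω n)^2 ≤ (ω 0)^2 := by nlinarith [(hpos n).le]
        nlinarith [norm_nonneg (x n 0), norm_nonneg (x n 1)]
      rw [e1, euc_norm_sq (x n)]
      linarith
    exact le_of_pow_le_pow_left₀ two_ne_zero (by positivity) key
  -- witness
  set a : EuclideanSpace ℂ (Fin 2) :=
    (WithLp.equiv 2 (Fin 2 → ℂ)).symm ![((s:ℝ)⁻¹ : ℂ), (-(ω 0) * s⁻¹ : ℂ)] with ha_def
  have ha0 : a 0 = ((s⁻¹ : ℝ) : ℂ) := by simp [ha_def]
  have ha1 : a 1 = ((-(ω 0) * s⁻¹ : ℝ) : ℂ) := by push_cast [ha_def]; simp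
  set b : EuclideanSpace ℂ (Fin 2) :=
    (WithLp.equiv 2 (Fin 2 → ℂ)).symm ![((s:ℝ) : ℂ), 0] with hb_def
  have hb0 : b 0 = ((s : ℝ) : ℂ) := by simp [hb_def]
  have hb1 : b 1 = 0 := by simp [hb_def]
  set x₀ : lp (fun _ : ℕ => EuclideanSpace ℂ (Fin 2)) 2 := lp.single 2 0 a with hx0_def
  have hnorm_a : ‖a‖ = 1 := by
    have h2 : ‖a‖^2 = 1 := by
      rw [euc_norm_sq, ha0, ha1]
      rw [Complex.norm_real, Complex.norm_real]
      rw [Real.norm_eq_abs, Real.norm_eq_abs]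
      rw [sq_abs, sq_abs]
      field_simp
      nlinarith [hpos 0]
    rw [← Real.sqrt_sq (norm_nonneg a), h2, Real.sqrt_one]
  have hnorm_b : ‖b‖ = s := by
    have h2 : ‖b‖^2 = s^2 := by
      rw [euc_norm_sq, hb0, hb1]
      rw [Complex.norm_real, Real.norm_eq_abs, sq_abs]
      simp
    rw [← Real.sqrt_sq (norm_nonneg b), h2, Real.sqrt_sq hs_pos.le]
  have hx0_norm : ‖x₀‖ = 1 := by
    rw [hx0_def]
    have := lp.norm_single (p := 2) (E := fun _ : ℕ => EuclideanSpace ℂ (Fin 2)) (by norm_num) 0 a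
    rw [this, hnorm_a]
  set y : lp (fun _ : ℕ => EuclideanSpace ℂ (Fin 2)) 2 := lp.single 2 0 b with hy_def
  have hTx0 : T x₀ = y := by
    apply lp.ext
    funext n
    apply PiLp.ext
    intro i
    by_cases hn : n = 0
    · subst hn
      have hx00 : x₀ 0 = a := by
        rw [hx0_def]
        exact lp.single_apply_self (E := fun _ : ℕ => EuclideanSpace ℂ (Fin 2)) 2 0 a
      have hrhs : y 0 = b := by rw [hy_def]; exact lp.single_apply_self (E := fun _ : ℕ => EuclideanSpace ℂ (Fin 2)) 2 0 b
      fin_cases i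
      · show (T x₀) 0 0 = y 0 0
        rw [(hT x₀ 0).1, show y 0 0 = b 0 from congrFun (congrArg WithLp.ofLp hrhs) 0, hb0]
        have e0 : x₀ 0 0 = a 0 := congrFun (congrArg WithLp.ofLp hx00) 0
        have e1 : x₀ 0 1 = a 1 := congrFun (congrArg WithLp.ofLp hx00) 1
        rw [e0, e1, ha0, ha1]
        have hc := congrArg (fun t : ℝ => (t : ℂ)) hr
        push_cast at hc ⊢
        linear_combination hc
      · show (T x₀) 0 1 = y 0 1
        rw [(hT x₀ 0).2, show y 0 1 = b 1 from congrFun (congrArg WithLp.ofLp hrhs) 1, hb1]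
    · have hx0n : x₀ n = 0 := by rw [hx0_def]; exact lp.single_apply_ne (E := fun _ : ℕ => EuclideanSpace ℂ (Fin 2)) 2 0 a hn
      have hrhs : y n = 0 := by rw [hy_def]; exact lp.single_apply_ne (E := fun _ : ℕ => EuclideanSpace ℂ (Fin 2)) 2 0 b hn
      fin_cases i
      · show (T x₀) n 0 = y n 0
        rw [(hT x₀ n).1, show y n 0 = (0 : EuclideanSpace ℂ (Fin 2)) 0 from congrFun (congrArg WithLp.ofLp hrhs) 0]
        have e0 : x₀ n 0 = 0 := by rw [hx0n]; rfl
        have e1 : x₀ n 1 = 0 := by rw [hx0n]; rfl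
        rw [e0, e1]
        simp
      · show (T x₀) n 1 = y n 1
        rw [(hT x₀ n).2, show y n 1 = (0 : EuclideanSpace ℂ (Fin 2)) 1 from congrFun (congrArg WithLp.ofLp hrhs) 1]
        rfl
  have hTx0_norm : ‖T x₀‖ = s := by
    rw [hTx0]
    have := lp.norm_single (p := 2) (E := fun _ : ℕ => EuclideanSpace ℂ (Fin 2)) (by norm_num) 0 b
    rw [this, hnorm_b]
  have hT_norm : ‖T‖ = s := by
    apply le_antisymm
    · exact T.opNorm_le_bound hs_pos.le hbound
    · have h := T.le_opNorm x₀
      rw [hTx0_norm, hx0_norm, mul_one] at h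
      exact h
  exact ⟨hidem, ⟨x₀, hx0_norm, by rw [hTx0_norm, hT_norm]⟩, hT_norm⟩
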